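/- Let (Ω, 𝓕, P) be a probability space and let X : Ω → ℝ be a bounded nonnegative random variable. Suppose that for every m ∈ ℕ there exist random variables Y₁, …, Y_{2^m} : Ω → ℝ which are independent, each having the same distribution as X, and such that X ≤ 2^{−m} Σ_{i=1}^{2^m} Y_i almost surely. Then X = E[X] almost surely. -/

import Mathlib

open MeasureTheory ProbabilityTheory

/-- If a bounded nonnegative random variable `X` is, for every `m`, almost surely
dominated by the average of `2^m` independent copies of itself, then `X` is almost
surely equal to its expectation. -/
theorem stmt_12 {Ω : Type*} [MeasurableSpace Ω] (P : Measure Ω) [IsProbabilityMeasure P]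
    (X : Ω → ℝ) (hX_meas : Measurable X) (hX_nonneg : ∀ ω, 0 ≤ X ω)
    (hX_bdd : ∃ M : ℝ, ∀ ω, X ω ≤ M)
    (h : ∀ m : ℕ, ∃ Y : Fin (2 ^ m) → Ω → ℝ,
      iIndepFun Y P ∧
      (∀ i, IdentDistrib (Y i) X P P) ∧
      (∀ᵐ ω ∂P, X ω ≤ (2 ^ m : ℝ)⁻¹ * ∑ i, Y i ω)) :
    X =ᵐ[P] fun _ => ∫ x, X x ∂P := by
  obtain ⟨M, hM⟩ := hX_bdd
  obtain ⟨Y, hIndep, hIdent, hle⟩ := h 1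
  have hXint : Integrable X P := by
    refine (integrable_const M).mono' hX_meas.aestronglyMeasurable ?_
    exact Filter.Eventually.of_forall fun ω => by
      rw [Real.norm_eq_abs, abs_of_nonneg (hX_nonneg ω)]; exact hM ω
  have hX2int : Integrable (fun ω => X ω ^ 2) P := by
    refine (integrable_const (M ^ 2)).mono'
      ((hX_meas.pow_const 2).aestronglyMeasurable) ?_
    refine Filter.Eventually.of_forall fun ω => ?_
    rw [Real.norm_eq_abs, abs_of_nonneg (sq_nonneg _)]
    exact pow_le_pow_left₀ (hX_nonneg ω) (hM ω) 2
  have hYint : ∀ i, Integrable (Y i) P := fun i => (hIdent i).integrable_iff.mpr hXint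
  have hYEq : ∀ i, ∫ ω, Y i ω ∂P = ∫ ω, X ω ∂P := fun i => (hIdent i).integral_eq
  have hY2 : ∀ i, IdentDistrib (fun ω => Y i ω ^ 2) (fun ω => X ω ^ 2) P P := fun i =>
    (hIdent i).comp (measurable_id.pow_const 2)
  have hY2int : ∀ i, Integrable (fun ω => Y i ω ^ 2) P := fun i =>
    (hY2 i).integrable_iff.mpr hX2int
  have hY2Eq : ∀ i, ∫ ω, Y i ω ^ 2 ∂P = ∫ ω, X ω ^ 2 ∂P := fun i => (hY2 i).integral_eq
  set μ : ℝ := ∫ ω, X ω ∂P with hμ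
  -- step 1: X equals the average a.e.
  set A : Ω → ℝ := fun ω => (2 : ℝ)⁻¹ * (Y 0 ω + Y 1 ω) with hA
  have hle' : ∀ᵐ ω ∂P, X ω ≤ A ω := by
    filter_upwards [hle] with ω hω
    simpa [A, Fin.sum_univ_two] using hω
  have hAint : Integrable A P := (((hYint 0).add (hYint 1)).const_mul _)
  have hAeq : ∫ ω, A ω ∂P = μ := by
    simp only [A]
    rw [integral_const_mul, integral_add (hYint 0) (hYint 1), hYEq 0, hYEq 1]
    ring
  have hdiff : (fun ω => A ω - X ω) =ᵐ[P] 0 := by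
    rw [← integral_eq_zero_iff_of_nonneg_ae]
    · rw [integral_sub hAint hXint, hAeq]; ring
    · filter_upwards [hle'] with ω hω; simpa using hω
    · exact hAint.sub hXint
  have hXA : X =ᵐ[P] A := by
    filter_upwards [hdiff] with ω hω
    have : A ω - X ω = 0 := hω
    linarith
  -- step 2: E[X^2] = μ^2
  have hind : IndepFun (Y 0) (Y 1) P := hIndep.indepFun (by decide)
  have hmul : ∫ ω, Y 0 ω * Y 1 ω ∂P = μ * μ := by
    have hm := hind.integral_mul_eq_mul_integral (hIdent 0).aemeasurable_fst.aestronglyMeasurable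
      (hIdent 1).aemeasurable_fst.aestronglyMeasurable
    rw [show (fun ω => Y 0 ω * Y 1 ω) = Y 0 * Y 1 from rfl, hm, hYEq 0, hYEq 1]
  have hmulint : Integrable (fun ω => Y 0 ω * Y 1 ω) P :=
    hind.integrable_mul (hYint 0) (hYint 1)
  have hmulint2 : Integrable (fun ω => 2 * (Y 0 ω * Y 1 ω)) P := hmulint.const_mul 2
  have h1 : ∫ ω, X ω ^ 2 ∂P = ∫ ω, A ω ^ 2 ∂P :=
    integral_congr_ae (hXA.mono fun ω hω => by dsimp only; rw [hω])
  have h2 : ∀ ω, A ω ^ 2 = (4 : ℝ)⁻¹ * (Y 0 ω ^ 2 + 2 * (Y 0 ω * Y 1 ω) + Y 1 ω ^ 2) := by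
    intro ω; simp only [A]; ring
  have i12 : Integrable (fun ω => Y 0 ω ^ 2 + 2 * (Y 0 ω * Y 1 ω)) P :=
    (hY2int 0).add hmulint2
  have key : ∫ ω, X ω ^ 2 ∂P
      = (4 : ℝ)⁻¹ * (∫ ω, X ω ^ 2 ∂P + 2 * (μ * μ) + ∫ ω, X ω ^ 2 ∂P) := by
    conv_lhs => rw [h1]; simp only [h2]
    rw [integral_const_mul, integral_add i12 (hY2int 1), integral_add (hY2int 0) hmulint2,
      integral_const_mul, hmul, hY2Eq 0, hY2Eq 1]
  have hX2 : ∫ ω, X ω ^ 2 ∂P = μ ^ 2 := by nlinarith [key]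
  -- step 3: variance zero ⇒ constant
  have hsubint : Integrable (fun ω => X ω ^ 2 - 2 * μ * X ω) P :=
    hX2int.sub (hXint.const_mul _)
  have hZint : Integrable (fun ω => (X ω - μ) ^ 2) P := by
    have : (fun ω => (X ω - μ) ^ 2) = fun ω => X ω ^ 2 - 2 * μ * X ω + μ ^ 2 := by
      funext ω; ring
    rw [this]
    exact hsubint.add (integrable_const _)
  have hZ : (fun ω => (X ω - μ) ^ 2) =ᵐ[P] 0 := by
    rw [← integral_eq_zero_iff_of_nonneg_ae]
    · have he : (fun ω => (X ω - μ) ^ 2) = fun ω => X ω ^ 2 - 2 * μ * X ω + μ ^ 2 := by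
        funext ω; ring
      rw [he, integral_add hsubint (integrable_const _),
        integral_sub hX2int (hXint.const_mul _), integral_const_mul, hX2, integral_const]
      simp [← hμ]
      ring
    · exact Filter.Eventually.of_forall fun ω => sq_nonneg _
    · exact hZint
  filter_upwards [hZ] with ω hω
  have h0 : (X ω - μ) ^ 2 = 0 := hω
  have := pow_eq_zero_iff (n := 2) (by norm_num) |>.mp h0
  simpa using sub_eq_zero.mp this
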